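/- Let μ satisfy the growth condition μ(Q(x,l)) ≤ C₀ l^n, let α ∈ (1,2], and let β > α^n. Suppose N is a positive integer and the cubes αQ, α²Q, ..., α^{N-1}Q are all non-(α,β)-doubling. Then K_{Q, α^N Q} ≤ C, where C depends only on α, β, n and C₀ (not on N or Q). -/

import Mathlib

open MeasureTheory ENNReal

structure Cube (d : ℕ) where
  center : Fin d → ℝ
  side : ℝ

namespace Cube

/-- The closed axis-parallel cube with the given center and side length. -/
def toSet {d : ℕ} (Q : Cube d) : Set (Fin d → ℝ) :=
  {y | ∀ i, |y i - Q.center i| ≤ Q.side / 2}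

/-- The concentric dilate `ηQ`. -/
def dilate {d : ℕ} (η : ℝ) (Q : Cube d) : Cube d :=
  ⟨Q.center, η * Q.side⟩

end Cube

/-- The growth condition `μ(Q(x,l)) ≤ C₀ l^n`. -/
def GrowthCondition {d : ℕ} (μ : Measure (Fin d → ℝ)) (C₀ n : ℝ) : Prop :=
  ∀ (x : Fin d → ℝ) (l : ℝ), 0 < l →
    μ (Cube.toSet ⟨x, l⟩) ≤ ENNReal.ofReal (C₀ * l ^ n)

/-- A cube `Q` is `(α,β)`-doubling if `μ(αQ) ≤ β μ(Q)`. -/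
def IsDoubling {d : ℕ} (μ : Measure (Fin d → ℝ)) (α β : ℝ) (Q : Cube d) : Prop :=
  μ (Q.dilate α).toSet ≤ ENNReal.ofReal β * μ Q.toSet

/-- `N_{Q,R}`: the first positive integer `k` with `l(2^k Q) ≥ l(R)`. -/
noncomputable def NQR {d : ℕ} (Q R : Cube d) : ℕ :=
  sInf {k : ℕ | 0 < k ∧ R.side ≤ 2 ^ k * Q.side}

/-- The coefficient `K_{Q,R} = 1 + ∑_{k=1}^{N_{Q,R}} μ(2^k Q)/l(2^k Q)^n`. -/
noncomputable def Kcoef {d : ℕ} (μ : Measure (Fin d → ℝ)) (n : ℝ) (Q R : Cube d) : ℝ :=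
  1 + ∑ k ∈ Finset.Icc 1 (NQR Q R),
    (μ ((Q.dilate (2 ^ k)).toSet)).toReal / ((2 ^ k * Q.side) ^ n)

/-- The μ-average `m_Q f` of `f` over a cube `Q`. -/
noncomputable def cubeAvg {d : ℕ} (μ : Measure (Fin d → ℝ))
    (f : (Fin d → ℝ) → ℝ) (Q : Cube d) : ℝ :=
  (∫ x in Q.toSet, f x ∂μ) / (μ Q.toSet).toReal

/-- The exponent of the smallest expansive concentric `(α,β)`-doubling cube. -/
noncomputable def expIdx {d : ℕ} (μ : Measure (Fin d → ℝ)) (α β : ℝ) (Q : Cube d) : ℕ :=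
  sInf {m : ℕ | IsDoubling μ α β (Q.dilate (α ^ m))}

/-- `Q̃`, the smallest expansive concentric `(α,β)`-doubling cube of `Q`. -/
noncomputable def tilde {d : ℕ} (μ : Measure (Fin d → ℝ)) (α β : ℝ) (Q : Cube d) : Cube d :=
  Q.dilate (α ^ expIdx μ α β Q)

/-- The exponent of the biggest contractive concentric `(α,β)`-doubling cube. -/
noncomputable def conIdx {d : ℕ} (μ : Measure (Fin d → ℝ)) (α β : ℝ) (Q : Cube d) : ℕ :=
  sInf {N : ℕ | IsDoubling μ α β (Q.dilate (α ^ (-(N : ℤ))))}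

/-- `Q'`, the biggest contractive concentric `(α,β)`-doubling cube of `Q`. -/
noncomputable def prim {d : ℕ} (μ : Measure (Fin d → ℝ)) (α β : ℝ) (Q : Cube d) : Cube d :=
  Q.dilate (α ^ (-(conIdx μ α β Q : ℤ)))
theorem stmt6 {d : ℕ} (μ : Measure (Fin d → ℝ)) (C₀ n α β : ℝ)
    (hC₀ : 0 < C₀) (hn : 0 < n) (hnd : n ≤ d) (hgrowth : GrowthCondition μ C₀ n)
    (hα1 : 1 < α) (hα2 : α ≤ 2) (hβ : α ^ n < β) :
    ∃ C : ℝ, 0 < C ∧ ∀ (Q : Cube d) (N : ℕ), 0 < Q.side → 0 < N →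
      (∀ j : ℕ, 1 ≤ j → j < N → ¬ IsDoubling μ α β (Q.dilate (α ^ j))) →
      Kcoef μ n Q (Q.dilate (α ^ N)) ≤ C := by
  have hα0 : (0:ℝ) < α := lt_trans one_pos hα1
  have hA1 : (1:ℝ) < α ^ n := Real.one_lt_rpow_iff_of_pos hα0 |>.mpr (Or.inl ⟨hα1, hn⟩)
  set A : ℝ := α ^ n with hA
  have hApos : (0:ℝ) < A := lt_trans one_pos hA1
  have hβ1 : (1:ℝ) < β := lt_trans hA1 hβ
  have hβ0 : (0:ℝ) < β := lt_trans one_pos hβ1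
  set r : ℝ := A / β with hr
  have hr0 : (0:ℝ) ≤ r := div_nonneg hApos.le hβ0.le
  have hr1 : r < 1 := (div_lt_one hβ0).mpr hβ
  have h1r : (0:ℝ) < 1 - r := by linarith
  refine ⟨1 + C₀ + C₀ * A * (1 - r)⁻¹, ?_, ?_⟩
  · have h1 : (0:ℝ) ≤ C₀ * A * (1 - r)⁻¹ :=
      mul_nonneg (mul_nonneg hC₀.le hApos.le) (inv_nonneg.mpr h1r.le)
    linarith
  intro Q N hl hN hND
  set l : ℝ := Q.side with hldef
  -- rpow of nat powers
  have hpowE : ∀ m : ℕ, ((α ^ m : ℝ)) ^ n = A ^ m := by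
    intro m
    rw [← Real.rpow_natCast α m, ← Real.rpow_mul hα0.le, mul_comm, Real.rpow_mul hα0.le,
      Real.rpow_natCast]
  -- monotonicity of cubes
  have hmono : ∀ a b : ℝ, a ≤ b → μ (Q.dilate a).toSet ≤ μ (Q.dilate b).toSet := by
    intro a b hab
    refine measure_mono fun y hy i => le_trans (hy i) ?_
    have : a * l ≤ b * l := mul_le_mul_of_nonneg_right hab hl.le
    simp only [Cube.dilate]
    linarith
  -- growth bound for dilates
  have hgq : ∀ a : ℝ, 0 < a →
      μ (Q.dilate a).toSet ≤ ENNReal.ofReal (C₀ * (a * l) ^ n) := by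
    intro a ha
    exact hgrowth Q.center (a * l) (mul_pos ha hl)
  -- chain of non-doublings
  have chain : ∀ m : ℕ, ∀ j : ℕ, 1 ≤ j → j + m ≤ N →
      ENNReal.ofReal (β ^ m) * μ (Q.dilate (α ^ j)).toSet ≤
        μ (Q.dilate (α ^ (j + m))).toSet := by
    intro m
    induction m with
    | zero => intro j hj1 hjN; simp
    | succ m ih =>
      intro j hj1 hjN
      have hstep : ENNReal.ofReal β * μ (Q.dilate (α ^ (j + m))).toSet ≤
          μ (Q.dilate (α ^ (j + m + 1))).toSet := by
        have hnd' := hND (j + m) (by omega) (by omega)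
        rw [IsDoubling] at hnd'
        have hlt := lt_of_not_ge hnd'
        have hcube : ((Q.dilate (α ^ (j + m))).dilate α) = Q.dilate (α ^ (j + m + 1)) := by
          simp only [Cube.dilate]
          rw [show α * (α ^ (j + m) * Q.side) = α ^ (j + m + 1) * Q.side by ring]
        rw [hcube] at hlt
        exact hlt.le
      have e1 : ENNReal.ofReal (β ^ (m + 1)) =
          ENNReal.ofReal β * ENNReal.ofReal (β ^ m) := by
        rw [← ENNReal.ofReal_mul hβ0.le, pow_succ, mul_comm]
      calc ENNReal.ofReal (β ^ (m + 1)) * μ (Q.dilate (α ^ j)).toSet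
          = ENNReal.ofReal β * (ENNReal.ofReal (β ^ m) * μ (Q.dilate (α ^ j)).toSet) := by
            rw [e1, mul_assoc]
        _ ≤ ENNReal.ofReal β * μ (Q.dilate (α ^ (j + m))).toSet :=
            mul_le_mul_right (ih j hj1 (by omega)) _
        _ ≤ μ (Q.dilate (α ^ (j + m + 1))).toSet := hstep
        _ = μ (Q.dilate (α ^ (j + (m + 1)))).toSet := by rw [Nat.add_assoc]
  -- the index function f
  set f : ℕ → ℕ := fun k => sInf {j : ℕ | (2:ℝ) ^ k ≤ α ^ j} with hf
  have hfne : ∀ k : ℕ, {j : ℕ | (2:ℝ) ^ k ≤ α ^ j}.Nonempty := by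
    intro k
    obtain ⟨j, hj⟩ := pow_unbounded_of_one_lt ((2:ℝ) ^ k) hα1
    exact ⟨j, hj.le⟩
  have hf_le : ∀ k : ℕ, (2:ℝ) ^ k ≤ α ^ f k := fun k => Nat.sInf_mem (hfne k)
  have hf1 : ∀ k : ℕ, 1 ≤ k → 1 ≤ f k := by
    intro k hk
    by_contra h
    have hf0 : f k = 0 := by omega
    have h2 : (2:ℝ) ≤ 2 ^ k := by
      calc (2:ℝ) = 2 ^ 1 := (pow_one 2).symm
        _ ≤ 2 ^ k := pow_le_pow_right₀ one_le_two hk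
    have := hf_le k
    rw [hf0, pow_zero] at this
    linarith
  have hf_low : ∀ k : ℕ, 1 ≤ k → α ^ (f k - 1) < (2:ℝ) ^ k := by
    intro k hk
    have hlt' : f k - 1 < f k := by have := hf1 k hk; omega
    have hmem := Nat.notMem_of_lt_sInf hlt'
    simp only [Set.mem_setOf_eq, not_le] at hmem
    exact hmem
  have hf_mono : ∀ k₁ k₂ : ℕ, 1 ≤ k₁ → k₁ < k₂ → f k₁ < f k₂ := by
    intro k₁ k₂ hk1 hlt
    by_contra hcon
    have hle : f k₂ ≤ f k₁ := by omega
    have h1 : α ^ f k₁ = α ^ (f k₁ - 1) * α := by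
      rw [← pow_succ]; congr 1; have := hf1 k₁ hk1; omega
    have h2 : α ^ (f k₁ - 1) * α < 2 ^ k₁ * 2 :=
      mul_lt_mul (hf_low k₁ hk1) hα2 hα0 (pow_nonneg (by norm_num) _)
    have h3 : (2:ℝ) ^ k₁ * 2 = 2 ^ (k₁ + 1) := (pow_succ 2 k₁).symm
    have h4 : (2:ℝ) ^ (k₁ + 1) ≤ 2 ^ k₂ := pow_le_pow_right₀ one_le_two (by omega)
    have h5 : (α:ℝ) ^ f k₂ ≤ α ^ f k₁ := pow_le_pow_right₀ hα1.le hle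
    have h6 := hf_le k₂
    linarith
  -- set M
  set M : ℕ := NQR Q (Q.dilate (α ^ N)) with hM
  have hside : (Q.dilate (α ^ N)).side = α ^ N * l := rfl
  have hNmem : N ∈ {k : ℕ | 0 < k ∧ (Q.dilate (α ^ N)).side ≤ 2 ^ k * Q.side} := by
    refine ⟨hN, ?_⟩
    rw [hside]
    exact mul_le_mul_of_nonneg_right (pow_le_pow_left₀ hα0.le hα2 N) hl.le
  have hM1 : 1 ≤ M := (Nat.sInf_mem ⟨N, hNmem⟩).1
  have hMlt : ∀ k : ℕ, 1 ≤ k → k < M → (2:ℝ) ^ k < α ^ N := by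
    intro k hk hkM
    have hnm := Nat.notMem_of_lt_sInf (show k < M from hkM)
    simp only [Set.mem_setOf_eq, not_and, not_le] at hnm
    have := hnm hk
    rw [hside] at this
    have := (mul_lt_mul_iff_left₀ hl).mp this
    linarith
  -- term bounds
  set term : ℕ → ℝ := fun k =>
    (μ ((Q.dilate ((2:ℝ) ^ k)).toSet)).toReal / (((2:ℝ) ^ k * l) ^ n) with hterm
  have hXpos : ∀ k : ℕ, (0:ℝ) < ((2:ℝ) ^ k * l) ^ n := by
    intro k; exact Real.rpow_pos_of_pos (by positivity) n
  have boundA : ∀ k : ℕ, term k ≤ C₀ := by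
    intro k
    have h1 : (μ ((Q.dilate ((2:ℝ) ^ k)).toSet)).toReal ≤ C₀ * ((2:ℝ) ^ k * l) ^ n := by
      refine ENNReal.toReal_le_of_le_ofReal ?_ (hgq _ (by positivity))
      exact mul_nonneg hC₀.le (hXpos k).le
    rw [hterm]
    rw [div_le_iff₀ (hXpos k)]
    exact h1
  have boundB : ∀ k : ℕ, 1 ≤ k → (2:ℝ) ^ k < α ^ N →
      term k ≤ C₀ * A * r ^ (N - f k) := by
    intro k hk h2kN
    set j : ℕ := f k with hj
    have hj2 : (2:ℝ) ^ k ≤ α ^ j := hf_le k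
    have hjN : j ≤ N := Nat.sInf_le (Set.mem_setOf_eq ▸ h2kN.le)
    have hj1 : 1 ≤ j := hf1 k hk
    have hlow : α ^ (j - 1) < (2:ℝ) ^ k := hf_low k hk
    -- ENNReal inequality
    have hkey : ENNReal.ofReal (β ^ (N - j)) * μ (Q.dilate ((2:ℝ) ^ k)).toSet ≤
        ENNReal.ofReal (C₀ * (α ^ N * l) ^ n) := by
      calc ENNReal.ofReal (β ^ (N - j)) * μ (Q.dilate ((2:ℝ) ^ k)).toSet
          ≤ ENNReal.ofReal (β ^ (N - j)) * μ (Q.dilate (α ^ j)).toSet :=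
            mul_le_mul_right (hmono _ _ hj2) _
        _ ≤ μ (Q.dilate (α ^ (j + (N - j)))).toSet := chain (N - j) j hj1 (by omega)
        _ = μ (Q.dilate (α ^ N)).toSet := by rw [Nat.add_sub_cancel' hjN]
        _ ≤ ENNReal.ofReal (C₀ * (α ^ N * l) ^ n) := hgq _ (pow_pos hα0 N)
    set m : ℝ := (μ ((Q.dilate ((2:ℝ) ^ k)).toSet)).toReal with hm
    have hm0 : 0 ≤ m := ENNReal.toReal_nonneg
    have hreal : β ^ (N - j) * m ≤ C₀ * (α ^ N * l) ^ n := by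
      have h1 : ENNReal.ofReal (β ^ (N - j) * m) ≤ ENNReal.ofReal (C₀ * (α ^ N * l) ^ n) := by
        rw [ENNReal.ofReal_mul (pow_nonneg hβ0.le _)]
        calc ENNReal.ofReal (β ^ (N - j)) * ENNReal.ofReal m
            ≤ ENNReal.ofReal (β ^ (N - j)) * μ (Q.dilate ((2:ℝ) ^ k)).toSet :=
              mul_le_mul_right ENNReal.ofReal_toReal_le _
          _ ≤ _ := hkey
      exact (ENNReal.ofReal_le_ofReal_iff
        (mul_nonneg hC₀.le (Real.rpow_pos_of_pos (by positivity) n).le)).mp h1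
    -- real inequality
    have hβpow : (0:ℝ) < β ^ (N - j) := pow_pos hβ0 _
    rw [hterm]
    rw [div_le_iff₀ (hXpos k)]
    -- suffices to compare after multiplying by β^(N-j)
    have hgoal : C₀ * (α ^ N * l) ^ n ≤
        β ^ (N - j) * (C₀ * A * r ^ (N - j) * (((2:ℝ) ^ k * l) ^ n)) := by
      have e1 : β ^ (N - j) * r ^ (N - j) = A ^ (N - j) := by
        rw [hr, div_pow]; field_simp
      have e2 : (α ^ N * l) ^ n = A ^ N * l ^ n := by
        rw [Real.mul_rpow (pow_nonneg hα0.le _) hl.le, hpowE]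
      have e3 : (((2:ℝ) ^ k * l) ^ n) = ((2:ℝ) ^ k) ^ n * l ^ n := by
        rw [Real.mul_rpow (by positivity) hl.le]
      have e4 : A ^ N = A * A ^ (N - j) * A ^ (j - 1) := by
        calc A ^ N = A ^ (1 + (N - j) + (j - 1)) := by congr 1; omega
          _ = A * A ^ (N - j) * A ^ (j - 1) := by ring
      have hAt : A ^ (j - 1) ≤ ((2:ℝ) ^ k) ^ n := by
        rw [← hpowE (j - 1)]
        exact Real.rpow_le_rpow (pow_nonneg hα0.le _) hlow.le hn.le
      have hln : (0:ℝ) < l ^ n := Real.rpow_pos_of_pos hl n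
      calc C₀ * (α ^ N * l) ^ n = C₀ * A * A ^ (N - j) * (A ^ (j - 1) * l ^ n) := by
            rw [e2, e4]; ring
        _ ≤ C₀ * A * A ^ (N - j) * (((2:ℝ) ^ k) ^ n * l ^ n) := by
            refine mul_le_mul_of_nonneg_left (mul_le_mul_of_nonneg_right hAt hln.le) ?_
            positivity
        _ = β ^ (N - j) * (C₀ * A * r ^ (N - j) * (((2:ℝ) ^ k * l) ^ n)) := by
            rw [e3, ← e1]; ring
    have := hreal.trans hgoal
    have := (mul_le_mul_iff_right₀ hβpow).mp this
    linarith
  -- geometric sum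
  have hinj : ∀ k₁ ∈ Finset.Icc 1 (M - 1), ∀ k₂ ∈ Finset.Icc 1 (M - 1),
      N - f k₁ = N - f k₂ → k₁ = k₂ := by
    intro k₁ hk₁ k₂ hk₂ heq
    simp only [Finset.mem_Icc] at hk₁ hk₂
    have hfN : ∀ k : ℕ, 1 ≤ k → k ≤ M - 1 → f k ≤ N := by
      intro k h1 h2
      exact Nat.sInf_le (Set.mem_setOf_eq ▸ (hMlt k h1 (by omega)).le)
    have h1 := hfN k₁ hk₁.1 hk₁.2
    have h2 := hfN k₂ hk₂.1 hk₂.2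
    by_contra hne
    rcases Nat.lt_or_ge k₁ k₂ with h | h
    · have := hf_mono k₁ k₂ hk₁.1 h; omega
    · have hlt : k₂ < k₁ := by omega
      have := hf_mono k₂ k₁ hk₂.1 hlt; omega
  have hgeo : ∑ k ∈ Finset.Icc 1 (M - 1), r ^ (N - f k) ≤ (1 - r)⁻¹ := by
    calc ∑ k ∈ Finset.Icc 1 (M - 1), r ^ (N - f k)
        = ∑ m ∈ (Finset.Icc 1 (M - 1)).image (fun k => N - f k), r ^ m :=
          (Finset.sum_image hinj).symm
      _ ≤ ∑' m : ℕ, r ^ m := Summable.sum_le_tsum _ (fun i _ => pow_nonneg hr0 i)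
          (summable_geometric_of_lt_one hr0 hr1)
      _ = (1 - r)⁻¹ := tsum_geometric_of_lt_one hr0 hr1
  have hsum : ∑ k ∈ Finset.Icc 1 (M - 1), term k ≤ C₀ * A * (1 - r)⁻¹ := by
    calc ∑ k ∈ Finset.Icc 1 (M - 1), term k
        ≤ ∑ k ∈ Finset.Icc 1 (M - 1), C₀ * A * r ^ (N - f k) := by
          refine Finset.sum_le_sum fun k hk => ?_
          simp only [Finset.mem_Icc] at hk
          exact boundB k hk.1 (hMlt k hk.1 (by omega))
      _ = C₀ * A * ∑ k ∈ Finset.Icc 1 (M - 1), r ^ (N - f k) := by rw [Finset.mul_sum]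
      _ ≤ C₀ * A * (1 - r)⁻¹ :=
          mul_le_mul_of_nonneg_left hgeo (mul_nonneg hC₀.le hApos.le)
  -- assemble
  have hsplit : ∑ k ∈ Finset.Icc 1 M, term k =
      ∑ k ∈ Finset.Icc 1 (M - 1), term k + term (M - 1 + 1) := by
    rw [show M = M - 1 + 1 by omega]
    exact Finset.sum_Icc_succ_top (by omega) term
  have hKeq : Kcoef μ n Q (Q.dilate (α ^ N)) = 1 + ∑ k ∈ Finset.Icc 1 M, term k := rfl
  rw [hKeq, hsplit]
  have htop := boundA (M - 1 + 1)
  linarith
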